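/- Let λ > 0 and let X = ∏_{i=1}^∞ min{∑_{k=1}^i E_k, 1} where E_1, E_2, … are i.i.d. Exp(λ). Then for every t ∈ (0,1), P(X ≤ t) ≤ exp(-((√(-log t) - √λ)_+)²), where x_+ = max{x, 0}. -/

import Mathlib

open MeasureTheory ProbabilityTheory Set

namespace Stmt4Aux

noncomputable def phiA (s x : ℝ) : ℝ := (1 - x ^ (1 - s)) / (1 - s) - (1 - x)

noncomputable def psiA (lam s x : ℝ) : ℝ := Real.exp (lam * phiA s (min x 1))

lemma phiA_nonneg {s x : ℝ} (hs : 0 < s) (hs1 : s < 1) (hx : 0 ≤ x) (hx1 : x ≤ 1) :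
    0 ≤ phiA s x := by
  have h : x ^ (1 - s) ≤ (1 - s) * x + s * 1 := by
    have := Real.geom_mean_le_arith_mean2_weighted (by linarith : (0:ℝ) ≤ 1 - s)
      hs.le hx (by norm_num : (0:ℝ) ≤ 1) (by ring)
    simpa using this
  have h2 : (1 - s) * (1 - x) ≤ 1 - x ^ (1 - s) := by nlinarith
  have h3 : (1 : ℝ) - x ≤ (1 - x ^ (1 - s)) / (1 - s) := by
    rw [le_div_iff₀ (by linarith : (0:ℝ) < 1 - s)]; nlinarith
  unfold phiA; linarith

lemma phiA_le {s x : ℝ} (hs1 : s < 1) (hx : 0 ≤ x) (hx1 : x ≤ 1) :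
    phiA s x ≤ 1 / (1 - s) := by
  have h0 : (0:ℝ) ≤ x ^ (1 - s) := Real.rpow_nonneg hx _
  have hpos : (0:ℝ) < 1 - s := by linarith
  have h1 : (1 - x ^ (1 - s)) / (1 - s) ≤ 1 / (1 - s) := by gcongr <;> linarith
  unfold phiA; linarith

lemma phiA_one {s : ℝ} : phiA s 1 = 0 := by simp [phiA]

lemma continuous_rpow_const {q : ℝ} (hq : 0 ≤ q) : Continuous fun x : ℝ => x ^ q :=
  continuous_iff_continuousAt.2 fun x => Real.continuousAt_rpow_const x q (Or.inr hq)

lemma psiA_continuous {lam s : ℝ} (hs1 : s < 1) : Continuous (psiA lam s) := by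
  unfold psiA phiA
  fun_prop (disch := first | positivity | linarith)

lemma psiA_of_one_le {lam s x : ℝ} (hx : 1 ≤ x) : psiA lam s x = 1 := by
  rw [psiA, min_eq_right hx, phiA_one, mul_zero, Real.exp_zero]

lemma psiA_pos {lam s x : ℝ} : 0 < psiA lam s x := Real.exp_pos _

lemma one_le_psiA {lam s x : ℝ} (hlam : 0 < lam) (hs : 0 < s) (hs1 : s < 1) (hx : 0 ≤ x) :
    1 ≤ psiA lam s x := by
  exact Real.one_le_exp (mul_nonneg hlam.le
    (phiA_nonneg hs hs1 (le_min hx zero_le_one) (min_le_right _ _)))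

lemma psiA_le {lam s x : ℝ} (hlam : 0 < lam) (hs1 : s < 1) (hx : 0 ≤ x) :
    psiA lam s x ≤ Real.exp (lam * (1 / (1 - s))) :=
  Real.exp_le_exp.2 (mul_le_mul_of_nonneg_left
    (phiA_le hs1 (le_min hx zero_le_one) (min_le_right _ _)) hlam.le)


lemma hasDerivAt_F {lam s x : ℝ} (hs : 0 < s) (hs1 : s < 1) (hx : 0 ≤ x)
    {u : ℝ} (hu : 0 < u) (hu1 : x + u < 1) :
    HasDerivAt (fun v => -(Real.exp (-(lam * v)) * psiA lam s (x + v)))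
      (lam * Real.exp (-(lam * u)) * ((x + u) ^ (-s) * psiA lam s (x + u))) u := by
  have hxu : 0 < x + u := by linarith
  set g : ℝ → ℝ := fun v => -(lam * v) + lam * phiA s (x + v) with hg
  -- derivative of v ↦ (x+v)^(1-s)
  have hA : HasDerivAt (fun v : ℝ => (x + v) ^ (1 - s)) ((1 - s) * (x + u) ^ (-s)) u := by
    have h0 : HasDerivAt (fun v : ℝ => x + v) 1 u := (hasDerivAt_id u).const_add x
    have h1 := (Real.hasDerivAt_rpow_const (x := x + u) (p := 1 - s)
      (Or.inl hxu.ne')).comp u h0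
    simpa [Function.comp_def, show (1:ℝ) - s - 1 = -s by ring] using h1
  -- derivative of v ↦ phiA s (x+v)
  have hB : HasDerivAt (fun v : ℝ => phiA s (x + v)) (-((x + u) ^ (-s)) + 1) u := by
    have h2 : HasDerivAt (fun v : ℝ => (1 - (x + v) ^ (1 - s)) / (1 - s))
        (-((1 - s) * (x + u) ^ (-s)) / (1 - s)) u := (hA.const_sub 1).div_const _
    have h3 : HasDerivAt (fun v : ℝ => (1 : ℝ) - (x + v)) (-1) u := by
      simpa using ((hasDerivAt_id u).const_add x).const_sub 1
    have h4 := h2.sub h3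
    have hne : (1 : ℝ) - s ≠ 0 := by linarith
    refine h4.congr_deriv ?_
    field_simp
    ring
  -- derivative of g
  have hC : HasDerivAt g (-(lam * ((x + u) ^ (-s)))) u := by
    have h5 : HasDerivAt (fun v : ℝ => -(lam * v)) (-lam) u := by
      simpa [Pi.neg_def] using ((hasDerivAt_id u).const_mul lam).neg
    have h6 := h5.add ((hB.const_mul lam))
    refine h6.congr_deriv ?_
    ring
  -- derivative of -(exp ∘ g)
  have hD : HasDerivAt (fun v => -(Real.exp (g v))) (-(Real.exp (g u) * (-(lam * ((x + u) ^ (-s)))))) u := by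
    simpa [mul_comm, Pi.neg_def] using (hC.exp.neg)
  -- transfer along local equality
  have hopen : IsOpen {v : ℝ | x + v < 1} :=
    isOpen_lt (by continuity) continuous_const
  have hmem : u ∈ {v : ℝ | x + v < 1} := hu1
  have heq : (fun v => -(Real.exp (-(lam * v)) * psiA lam s (x + v))) =ᶠ[nhds u]
      (fun v => -(Real.exp (g v))) := by
    filter_upwards [hopen.mem_nhds hmem] with v hv
    have : psiA lam s (x + v) = Real.exp (lam * phiA s (x + v)) := by
      rw [psiA, min_eq_left (le_of_lt hv)]
    rw [this, hg, ← Real.exp_add]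
  have := hD.congr_of_eventuallyEq heq
  refine this.congr_deriv ?_
  have hpsi : psiA lam s (x + u) = Real.exp (lam * phiA s (x + u)) := by
    rw [psiA, min_eq_left hu1.le]
  simp only [hg, hpsi, Real.exp_add]
  ring

lemma tail_lintegral {lam : ℝ} (hlam : 0 < lam) {b : ℝ} (hb : 0 ≤ b) :
    ∫⁻ u in Ioi b, exponentialPDF lam u = ENNReal.ofReal (Real.exp (-(lam * b))) := by
  have hint : IntegrableOn (fun u => lam * Real.exp (-(lam * u))) (Ioi b) volume := by
    have := (exp_neg_integrableOn_Ioi b hlam).const_mul lam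
    simp only [neg_mul] at this
    exact this
  have hval : ∫ u in Ioi b, lam * Real.exp (-(lam * u)) = Real.exp (-(lam * b)) := by
    have hderiv : ∀ x ∈ Ioi b, HasDerivAt (fun a => -Real.exp (-(lam * a)))
        (lam * Real.exp (-(lam * x))) x := fun x _ => hasDerivAt_neg_exp_mul_exp
    have htend : Filter.Tendsto (fun a => -Real.exp (-(lam * a))) Filter.atTop (nhds 0) := by
      have h1 : Filter.Tendsto (fun a : ℝ => lam * a) Filter.atTop Filter.atTop :=
        Filter.Tendsto.const_mul_atTop hlam Filter.tendsto_id
      have := (Real.tendsto_exp_neg_atTop_nhds_zero.comp h1).neg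
      simpa using this
    have hcont : ContinuousWithinAt (fun a => -Real.exp (-(lam * a))) (Ici b) b :=
      (Continuous.continuousWithinAt (by fun_prop))
    have := integral_Ioi_of_hasDerivAt_of_tendsto hcont hderiv hint htend
    simpa using this
  calc ∫⁻ u in Ioi b, exponentialPDF lam u
      = ∫⁻ u in Ioi b, ENNReal.ofReal (lam * Real.exp (-(lam * u))) := by
        refine setLIntegral_congr_fun measurableSet_Ioi ?_
        intro u hu
        exact exponentialPDF_of_nonneg (le_trans hb (le_of_lt hu))
    _ = ENNReal.ofReal (∫ u in Ioi b, lam * Real.exp (-(lam * u))) := by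
        rw [ofReal_integral_eq_lintegral_ofReal hint]
        exact Filter.Eventually.of_forall fun u => by positivity
    _ = ENNReal.ofReal (Real.exp (-(lam * b))) := by rw [hval]

lemma G_integrable {lam s x b : ℝ} (hlam : 0 < lam) (hs : 0 < s) (hs1 : s < 1)
    (hx : 0 ≤ x) (hb : 0 ≤ b) :
    IntervalIntegrable
      (fun u => lam * Real.exp (-(lam * u)) * ((x + u) ^ (-s) * psiA lam s (x + u)))
      volume 0 b := by
  set C : ℝ := lam * Real.exp (lam * (1 / (1 - s))) with hC
  have hCpos : 0 < C := by positivity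
  have h1 : IntervalIntegrable (fun u : ℝ => (x + u) ^ (-s)) volume 0 b := by
    have h0 := (intervalIntegral.intervalIntegrable_rpow' (a := x) (b := x + b)
      (by linarith : (-1:ℝ) < -s)).comp_add_right x
    simp only [sub_self, add_sub_cancel_left] at h0
    simpa [add_comm] using h0
  have h2 := h1.const_mul C
  refine h2.mono_fun ?_ ?_
  · apply Measurable.aestronglyMeasurable
    have hψm : Measurable fun u : ℝ => psiA lam s (x + u) :=
      ((psiA_continuous hs1).comp (by continuity)).measurable
    exact (by fun_prop : Measurable fun u : ℝ => lam * Real.exp (-(lam * u))).mul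
      ((by fun_prop : Measurable fun u : ℝ => (x + u) ^ (-s)).mul hψm)
  · rw [Set.uIoc_of_le hb]
    refine (ae_restrict_iff' measurableSet_Ioc).2 (Filter.Eventually.of_forall ?_)
    intro u hu
    dsimp only
    have hu0 : 0 < u := hu.1
    have hxu : 0 ≤ x + u := by linarith
    have hA : 0 ≤ (x + u) ^ (-s) := Real.rpow_nonneg hxu _
    have he : Real.exp (-(lam * u)) ≤ 1 := Real.exp_le_one_iff.2 (by nlinarith)
    have hψ : psiA lam s (x + u) ≤ Real.exp (lam * (1 / (1 - s))) := psiA_le hlam hs1 hxu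
    have hG0 : 0 ≤ lam * Real.exp (-(lam * u)) * ((x + u) ^ (-s) * psiA lam s (x + u)) := by
      have := psiA_pos (lam := lam) (s := s) (x := x + u)
      positivity
    rw [Real.norm_of_nonneg hG0, Real.norm_of_nonneg (by positivity)]
    have heψ : Real.exp (-(lam * u)) * psiA lam s (x + u) ≤ Real.exp (lam * (1 / (1 - s))) := by
      have := psiA_pos (lam := lam) (s := s) (x := x + u)
      nlinarith [Real.exp_pos (-(lam * u))]
    calc lam * Real.exp (-(lam * u)) * ((x + u) ^ (-s) * psiA lam s (x + u))
        = lam * (x + u) ^ (-s) * (Real.exp (-(lam * u)) * psiA lam s (x + u)) := by ring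
      _ ≤ lam * (x + u) ^ (-s) * Real.exp (lam * (1 / (1 - s))) := by
          apply mul_le_mul_of_nonneg_left heψ (by positivity)
      _ = C * (x + u) ^ (-s) := by rw [hC]; ring

lemma expMeasure_eq (lam : ℝ) : expMeasure lam = volume.withDensity (exponentialPDF lam) := rfl

lemma measurable_exponentialPDF (lam : ℝ) : Measurable (exponentialPDF lam) :=
  (measurable_exponentialPDFReal lam).ennreal_ofReal

lemma key {lam s : ℝ} (hlam : 0 < lam) (hs : 0 < s) (hs1 : s < 1) {x : ℝ} (hx : 0 ≤ x) :
    ∫⁻ u, ENNReal.ofReal (min (x + u) 1 ^ (-s) * psiA lam s (x + u)) ∂(expMeasure lam)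
      ≤ ENNReal.ofReal (psiA lam s x) := by
  have hψm : Measurable fun u : ℝ => psiA lam s (x + u) :=
    ((psiA_continuous hs1).comp (by continuity)).measurable
  have hfm : Measurable fun u : ℝ => ENNReal.ofReal (min (x + u) 1 ^ (-s) * psiA lam s (x + u)) := by
    apply Measurable.ennreal_ofReal
    exact (by fun_prop : Measurable fun u : ℝ => min (x + u) 1 ^ (-s)).mul hψm
  rw [expMeasure_eq, lintegral_withDensity_eq_lintegral_mul _ (measurable_exponentialPDF lam) hfm]
  set f : ℝ → ENNReal := fun u =>
    exponentialPDF lam u * ENNReal.ofReal (min (x + u) 1 ^ (-s) * psiA lam s (x + u)) with hf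
  have hzero : ∫⁻ u in Iio 0, f u = 0 := by
    rw [setLIntegral_congr_fun measurableSet_Iio
      (fun u (hu : u < 0) => ?_), lintegral_zero]
    rw [hf]
    simp [exponentialPDF_of_neg hu]
  have hsplit : ∫⁻ u, f u = ∫⁻ u in Ioi 0, f u := by
    rw [← lintegral_add_compl (f) (measurableSet_Ici (a := (0:ℝ))), compl_Ici, hzero, add_zero,
      ← Measure.restrict_congr_set Ioi_ae_eq_Ici]
  rw [show (fun u => (exponentialPDF lam * fun u => ENNReal.ofReal (min (x + u) 1 ^ (-s) * psiA lam s (x + u))) u) = f from rfl]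
  rw [hsplit]
  rcases le_or_gt 1 x with hx1 | hx1
  · -- trivial case x ≥ 1
    have heq : ∫⁻ u in Ioi 0, f u = ∫⁻ u in Ioi 0, exponentialPDF lam u := by
      refine setLIntegral_congr_fun measurableSet_Ioi
        (fun u (hu : 0 < u) => ?_)
      rw [hf]
      have h1 : min (x + u) 1 = 1 := min_eq_right (by linarith)
      have h2 : psiA lam s (x + u) = 1 := psiA_of_one_le (by linarith)
      simp [h1, h2, Real.one_rpow]
    rw [heq, psiA_of_one_le hx1]
    calc ∫⁻ u in Ioi 0, exponentialPDF lam u ≤ ∫⁻ u, exponentialPDF lam u :=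
          setLIntegral_le_lintegral _ _
      _ = 1 := lintegral_exponentialPDF_eq_one hlam
      _ = ENNReal.ofReal 1 := by simp
  · -- main case x < 1
    set b : ℝ := 1 - x with hbdef
    have hb : 0 < b := by simp [hbdef]; linarith
    set G : ℝ → ℝ := fun u => lam * Real.exp (-(lam * u)) * ((x + u) ^ (-s) * psiA lam s (x + u))
      with hG
    have hGint : IntervalIntegrable G volume 0 b := G_integrable hlam hs hs1 hx hb.le
    have hGnn : ∀ u ∈ Ioc 0 b, 0 ≤ G u := by
      intro u hu
      have hxu : (0:ℝ) ≤ x + u := by linarith [hu.1]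
      have := psiA_pos (lam := lam) (s := s) (x := x + u)
      have := Real.rpow_nonneg hxu (-s)
      rw [hG]
      positivity
    rw [← Ioc_union_Ioi_eq_Ioi hb.le, lintegral_union measurableSet_Ioi (Ioc_disjoint_Ioi le_rfl)]
    have hpiece1 : ∫⁻ u in Ioc 0 b, f u = ENNReal.ofReal (psiA lam s x - Real.exp (-(lam * b))) := by
      have heq1 : ∫⁻ u in Ioc 0 b, f u = ∫⁻ u in Ioc 0 b, ENNReal.ofReal (G u) := by
        refine setLIntegral_congr_fun measurableSet_Ioc
          (fun u hu => ?_)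
        simp only [hf, hG]
        have h1 : min (x + u) 1 = x + u := min_eq_left (by rw [hbdef] at hu; linarith [hu.2])
        rw [exponentialPDF_of_nonneg hu.1.le, h1,
          ← ENNReal.ofReal_mul (by positivity), ← mul_assoc]
      rw [heq1, ← ofReal_integral_eq_lintegral_ofReal hGint.1
        ((ae_restrict_iff' measurableSet_Ioc).2 (Filter.Eventually.of_forall hGnn))]
      congr 1
      have hcont : ContinuousOn (fun v => -(Real.exp (-(lam * v)) * psiA lam s (x + v))) (Icc 0 b) := by
        apply Continuous.continuousOn
        have := psiA_continuous (lam := lam) hs1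
        fun_prop
      have hderiv : ∀ u ∈ Ioo 0 b, HasDerivWithinAt
          (fun v => -(Real.exp (-(lam * v)) * psiA lam s (x + v))) (G u) (Ioi u) u := fun u hu =>
        (hasDerivAt_F hs hs1 hx hu.1 (by rw [hbdef] at hu; linarith [hu.2])).hasDerivWithinAt
      have hFTC := intervalIntegral.integral_eq_sub_of_hasDeriv_right_of_le hb.le hcont hderiv hGint
      rw [← intervalIntegral.integral_of_le hb.le, hFTC]
      have h1 : x + b = 1 := by rw [hbdef]; ring
      simp only [h1, psiA_of_one_le le_rfl, mul_zero, neg_zero, Real.exp_zero, add_zero,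
        mul_one, one_mul]
      ring
    have hpiece2 : ∫⁻ u in Ioi b, f u = ENNReal.ofReal (Real.exp (-(lam * b))) := by
      have heq2 : ∫⁻ u in Ioi b, f u = ∫⁻ u in Ioi b, exponentialPDF lam u := by
        refine setLIntegral_congr_fun measurableSet_Ioi
          (fun u (hu : b < u) => ?_)
        rw [hf]
        have h1 : min (x + u) 1 = 1 := min_eq_right (by rw [hbdef] at hu; linarith)
        have h2 : psiA lam s (x + u) = 1 := psiA_of_one_le (by rw [hbdef] at hu; linarith)
        simp [h1, h2, Real.one_rpow]
      rw [heq2]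
      exact tail_lintegral hlam hb.le
    rw [hpiece1, hpiece2, ← ENNReal.ofReal_add ?h1 (Real.exp_nonneg _)]
    · apply le_of_eq; congr 1; ring
    case h1 =>
      have h2 : Real.exp (-(lam * b)) ≤ 1 := Real.exp_le_one_iff.2 (by nlinarith)
      have h3 := one_le_psiA (x := x) hlam hs hs1 hx
      linarith

noncomputable def W (s : ℝ) : (n : ℕ) → ℝ → (Fin n → ℝ) → ENNReal
  | 0, _, _ => 1
  | n+1, x, y => ENNReal.ofReal (min (x + y 0) 1 ^ (-s)) * W s n (x + y 0) (Fin.tail y)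

lemma W_meas (s : ℝ) : ∀ n, Measurable (fun p : ℝ × (Fin n → ℝ) => W s n p.1 p.2)
  | 0 => measurable_const
  | n+1 => by
    have h1 : Measurable fun p : ℝ × (Fin (n+1) → ℝ) =>
        ENNReal.ofReal (min (p.1 + p.2 0) 1 ^ (-s)) := by
      apply Measurable.ennreal_ofReal
      fun_prop
    have h2 : Measurable fun p : ℝ × (Fin (n+1) → ℝ) =>
        ((p.1 + p.2 0, Fin.tail p.2) : ℝ × (Fin n → ℝ)) := by
      refine Measurable.prodMk
        (by fun_prop : Measurable fun p : ℝ × (Fin (n+1) → ℝ) => p.1 + p.2 0) ?_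
      exact measurable_pi_iff.2 fun i => (measurable_pi_apply i.succ).comp measurable_snd
    exact h1.mul ((W_meas s n).comp h2)

lemma W_apply (s : ℝ) : ∀ (n : ℕ) (x : ℝ) (z : ℕ → ℝ),
    W s n x (fun i : Fin n => z i) =
      ∏ i ∈ Finset.range n,
        ENNReal.ofReal (min (x + ∑ k ∈ Finset.range (i+1), z k) 1 ^ (-s)) := by
  intro n
  induction n with
  | zero => intro x z; simp [W]
  | succ n ih =>
    intro x z
    have htail : Fin.tail (fun i : Fin (n+1) => z i) = fun i : Fin n => z (i + 1) := by
      funext i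
      simp [Fin.tail, Fin.val_succ]
    rw [show W s (n+1) x (fun i : Fin (n+1) => z i) =
      ENNReal.ofReal (min (x + z 0) 1 ^ (-s)) *
        W s n (x + z 0) (Fin.tail (fun i : Fin (n+1) => z i)) from rfl]
    rw [htail, ih (x + z 0) (fun k => z (k+1))]
    rw [Finset.prod_range_succ' (fun i =>
      ENNReal.ofReal (min (x + ∑ k ∈ Finset.range (i+1), z k) 1 ^ (-s))) n]
    rw [mul_comm]
    congr 1
    · apply Finset.prod_congr rfl
      intro i _
      rw [Finset.sum_range_succ' z (i+1)]
      congr 3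
      ring
    · congr 3
      simp

lemma expMeasure_Iio_zero {lam : ℝ} : expMeasure lam (Iio 0) = 0 := by
  rw [expMeasure_eq, withDensity_apply _ measurableSet_Iio]
  exact lintegral_exponentialPDF_of_nonpos le_rfl

lemma expMeasure_ae_nonneg {lam : ℝ} : ∀ᵐ u ∂(expMeasure lam), 0 ≤ u := by
  rw [ae_iff]
  convert expMeasure_Iio_zero (lam := lam) using 2
  ext u; simp

lemma W_lintegral_le {lam s : ℝ} (hlam : 0 < lam) (hs : 0 < s) (hs1 : s < 1) :
    ∀ (n : ℕ) (x : ℝ), 0 ≤ x →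
      ∫⁻ y, W s n x y ∂(Measure.pi fun _ : Fin n => expMeasure lam)
        ≤ ENNReal.ofReal (psiA lam s x) := by
  have : IsProbabilityMeasure (expMeasure lam) := isProbabilityMeasure_expMeasure hlam
  intro n
  induction n with
  | zero =>
    intro x hx
    have : (∫⁻ y, W s 0 x y ∂(Measure.pi fun _ : Fin 0 => expMeasure lam)) = 1 := by
      simp [W]
    rw [this]
    exact ENNReal.one_le_ofReal.2 (one_le_psiA hlam hs hs1 hx)
  | succ n ih =>
    intro x hx
    set μ := expMeasure lam with hμ
    set e := MeasurableEquiv.piFinSuccAbove (fun _ : Fin (n+1) => ℝ) 0 with he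
    have hmp := measurePreserving_piFinSuccAbove (fun _ : Fin (n+1) => μ) 0
    have happly : ∀ y : Fin (n+1) → ℝ, e y = (y 0, Fin.tail y) := by
      intro y
      rw [he]
      simp [MeasurableEquiv.piFinSuccAbove, Fin.succAbove_zero]
    have hsymm0 : ∀ p : ℝ × (Fin n → ℝ), (e.symm p) 0 = p.1 := by
      intro p
      have := e.apply_symm_apply p
      rw [happly] at this
      exact congrArg Prod.fst this
    have hsymmtail : ∀ p : ℝ × (Fin n → ℝ), Fin.tail (e.symm p) = p.2 := by
      intro p
      have := e.apply_symm_apply p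
      rw [happly] at this
      exact congrArg Prod.snd this
    have hWsymm : ∀ p : ℝ × (Fin n → ℝ), W s (n+1) x (e.symm p) =
        ENNReal.ofReal (min (x + p.1) 1 ^ (-s)) * W s n (x + p.1) p.2 := by
      intro p
      rw [show W s (n+1) x (e.symm p) = ENNReal.ofReal (min (x + (e.symm p) 0) 1 ^ (-s)) *
        W s n (x + (e.symm p) 0) (Fin.tail (e.symm p)) from rfl, hsymm0, hsymmtail]
    have hg : Measurable fun p : ℝ × (Fin n → ℝ) =>
        ENNReal.ofReal (min (x + p.1) 1 ^ (-s)) * W s n (x + p.1) p.2 := by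
      have hm1 : Measurable fun p : ℝ × (Fin n → ℝ) => ENNReal.ofReal (min (x + p.1) 1 ^ (-s)) := by
        apply Measurable.ennreal_ofReal
        fun_prop
      have hm2 : Measurable fun p : ℝ × (Fin n → ℝ) =>
          ((x + p.1, p.2) : ℝ × (Fin n → ℝ)) := (measurable_const.add measurable_fst).prodMk
          measurable_snd
      exact hm1.mul ((W_meas s n).comp hm2)
    calc ∫⁻ y, W s (n+1) x y ∂(Measure.pi fun _ : Fin (n+1) => μ)
        = ∫⁻ p, ENNReal.ofReal (min (x + p.1) 1 ^ (-s)) * W s n (x + p.1) p.2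
            ∂(μ.prod (Measure.pi fun _ : Fin n => μ)) := by
          rw [← hmp.lintegral_comp hg]
          apply lintegral_congr
          intro y
          rw [show e y = (y 0, Fin.tail y) from happly y]
          rfl
      _ = ∫⁻ u, ∫⁻ z, ENNReal.ofReal (min (x + u) 1 ^ (-s)) * W s n (x + u) z
            ∂(Measure.pi fun _ : Fin n => μ) ∂μ := lintegral_prod _ hg.aemeasurable
      _ = ∫⁻ u, ENNReal.ofReal (min (x + u) 1 ^ (-s)) *
            ∫⁻ z, W s n (x + u) z ∂(Measure.pi fun _ : Fin n => μ) ∂μ := by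
          apply lintegral_congr
          intro u
          have hWm : Measurable fun z : Fin n → ℝ => W s n (x + u) z :=
            (W_meas s n).comp measurable_prodMk_left
          rw [lintegral_const_mul _ hWm]
      _ ≤ ∫⁻ u, ENNReal.ofReal (min (x + u) 1 ^ (-s) * psiA lam s (x + u)) ∂μ := by
          apply lintegral_mono_ae
          filter_upwards [expMeasure_ae_nonneg (lam := lam)] with u hu
          have hxu : 0 ≤ x + u := by linarith
          have hmin : 0 ≤ min (x + u) 1 := le_min hxu zero_le_one
          rw [ENNReal.ofReal_mul (Real.rpow_nonneg hmin _)]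
          exact mul_le_mul_right (ih (x + u) hxu) _
      _ ≤ ENNReal.ofReal (psiA lam s x) := key hlam hs hs1 hx

lemma exp_moment {lam : ℝ} (hlam : 0 < lam) :
    ∫⁻ u, ENNReal.ofReal (Real.exp (-u)) ∂(expMeasure lam)
      = ENNReal.ofReal (lam / (1 + lam)) := by
  have h1p : (0:ℝ) < 1 + lam := by linarith
  rw [expMeasure_eq, lintegral_withDensity_eq_lintegral_mul _ (measurable_exponentialPDF lam)
    (by fun_prop : Measurable fun u : ℝ => ENNReal.ofReal (Real.exp (-u)))]
  set f : ℝ → ENNReal := fun u => exponentialPDF lam u * ENNReal.ofReal (Real.exp (-u)) with hf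
  have hzero : ∫⁻ u in Iio 0, f u = 0 := by
    rw [setLIntegral_congr_fun measurableSet_Iio
      (fun u (hu : u < 0) => ?_), lintegral_zero]
    rw [hf]
    simp [exponentialPDF_of_neg hu]
  have hsplit : ∫⁻ u, f u = ∫⁻ u in Ioi 0, f u := by
    rw [← lintegral_add_compl (f) (measurableSet_Ici (a := (0:ℝ))), compl_Ici, hzero, add_zero,
      ← Measure.restrict_congr_set Ioi_ae_eq_Ici]
  rw [show (fun u => (exponentialPDF lam * fun u => ENNReal.ofReal (Real.exp (-u))) u) = f from rfl,
    hsplit]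
  have heq : ∫⁻ u in Ioi 0, f u
      = ∫⁻ u in Ioi 0, ENNReal.ofReal (lam / (1 + lam)) * exponentialPDF (1 + lam) u := by
    refine setLIntegral_congr_fun measurableSet_Ioi
      (fun u (hu : 0 < u) => ?_)
    rw [hf]
    simp only
    rw [exponentialPDF_of_nonneg hu.le, exponentialPDF_of_nonneg hu.le,
      ← ENNReal.ofReal_mul (by positivity), ← ENNReal.ofReal_mul (by positivity)]
    congr 1
    rw [mul_assoc, ← Real.exp_add, show -(lam * u) + -u = -((1 + lam) * u) by ring]
    field_simp
  rw [heq, lintegral_const_mul _ (measurable_exponentialPDF (1 + lam)),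
    tail_lintegral h1p le_rfl]
  simp

lemma piSucc_apply (n : ℕ) (y : Fin (n+1) → ℝ) :
    (MeasurableEquiv.piFinSuccAbove (fun _ : Fin (n+1) => ℝ) 0) y = (y 0, Fin.tail y) := by
  simp [MeasurableEquiv.piFinSuccAbove, Fin.succAbove_zero]

lemma expSum_lintegral {lam : ℝ} (hlam : 0 < lam) :
    ∀ n : ℕ, ∫⁻ y, ENNReal.ofReal (Real.exp (-(∑ i, y i)))
        ∂(Measure.pi fun _ : Fin n => expMeasure lam)
      = ENNReal.ofReal (lam / (1 + lam)) ^ n := by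
  have hprob : IsProbabilityMeasure (expMeasure lam) := isProbabilityMeasure_expMeasure hlam
  intro n
  induction n with
  | zero => simp
  | succ n ih =>
    set μ := expMeasure lam with hμ
    set e := MeasurableEquiv.piFinSuccAbove (fun _ : Fin (n+1) => ℝ) 0 with he
    have hmp := measurePreserving_piFinSuccAbove (fun _ : Fin (n+1) => μ) 0
    have hsum : Measurable fun p : ℝ × (Fin n → ℝ) => ∑ i, p.2 i :=
      Finset.measurable_sum _ (fun i _ => (measurable_pi_apply i).comp measurable_snd)
    have hg : Measurable fun p : ℝ × (Fin n → ℝ) =>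
        ENNReal.ofReal (Real.exp (-p.1)) * ENNReal.ofReal (Real.exp (-(∑ i, p.2 i))) :=
      (Measurable.ennreal_ofReal (by fun_prop)).mul
        (Measurable.ennreal_ofReal (Real.continuous_exp.measurable.comp hsum.neg))
    have hinner : Measurable fun z : Fin n → ℝ => ENNReal.ofReal (Real.exp (-(∑ i, z i))) :=
      Measurable.ennreal_ofReal (Real.continuous_exp.measurable.comp
        (Finset.measurable_sum _ (fun i _ => measurable_pi_apply i)).neg)
    calc ∫⁻ y, ENNReal.ofReal (Real.exp (-(∑ i, y i))) ∂(Measure.pi fun _ : Fin (n+1) => μ)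
        = ∫⁻ p, ENNReal.ofReal (Real.exp (-p.1)) * ENNReal.ofReal (Real.exp (-(∑ i, p.2 i)))
            ∂(μ.prod (Measure.pi fun _ : Fin n => μ)) := by
          rw [← hmp.lintegral_comp hg]
          apply lintegral_congr
          intro y
          rw [show (MeasurableEquiv.piFinSuccAbove (fun _ : Fin (n+1) => ℝ) 0) y
            = (y 0, Fin.tail y) from piSucc_apply n y]
          simp only
          rw [← ENNReal.ofReal_mul (by positivity), ← Real.exp_add]
          congr 2
          rw [Fin.sum_univ_succ]
          simp [Fin.tail]
          ring
      _ = ∫⁻ u, ∫⁻ z, ENNReal.ofReal (Real.exp (-u)) * ENNReal.ofReal (Real.exp (-(∑ i, z i)))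
            ∂(Measure.pi fun _ : Fin n => μ) ∂μ := lintegral_prod _ hg.aemeasurable
      _ = ∫⁻ u, ENNReal.ofReal (Real.exp (-u)) * ENNReal.ofReal (lam / (1 + lam)) ^ n ∂μ := by
          apply lintegral_congr
          intro u
          rw [lintegral_const_mul _ hinner, ih]
      _ = ENNReal.ofReal (lam / (1 + lam)) ^ (n + 1) := by
          rw [lintegral_mul_const _ (by fun_prop), exp_moment hlam, ← pow_succ']

lemma map_fin_eq_pi {Ω : Type*} [MeasurableSpace Ω] (P : Measure Ω) {lam : ℝ} (hlam : 0 < lam)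
    (E : ℕ → Ω → ℝ) (hEmeas : ∀ i, Measurable (E i))
    (hEindep : iIndepFun E P)
    (hEdist : ∀ i, P.map (E i) = expMeasure lam) (n : ℕ) :
    P.map (fun ω (i : Fin n) => E i ω) = Measure.pi (fun _ : Fin n => expMeasure lam) := by
  haveI : IsProbabilityMeasure (expMeasure lam) := isProbabilityMeasure_expMeasure hlam
  have hT : Measurable fun ω (i : Fin n) => E i ω := measurable_pi_iff.2 fun i => hEmeas i
  symm
  apply Measure.pi_eq
  intro s hs
  rw [Measure.map_apply hT (MeasurableSet.univ_pi hs)]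
  have hpre : (fun ω (i : Fin n) => E i ω) ⁻¹' (Set.univ.pi s)
      = ⋂ k ∈ Finset.range n, E k ⁻¹' (if h : k < n then s ⟨k, h⟩ else Set.univ) := by
    ext ω
    simp only [Set.mem_preimage, Set.mem_univ_pi, Set.mem_iInter, Finset.mem_range]
    constructor
    · intro h k hk
      simp only [dif_pos hk]
      exact h ⟨k, hk⟩
    · intro h i
      have := h i.1 i.2
      simpa only [dif_pos i.2, Fin.eta] using this
  rw [hpre, hEindep.measure_inter_preimage_eq_mul (Finset.range n)
    (fun k hk => by
      simp only [dif_pos (Finset.mem_range.1 hk)]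
      exact hs _)]
  rw [Finset.prod_range (fun k => P (E k ⁻¹' (if h : k < n then s ⟨k, h⟩ else Set.univ)))]
  apply Finset.prod_congr rfl
  intro i _
  simp only [dif_pos i.2, Fin.eta]
  rw [← hEdist i, Measure.map_apply (hEmeas i) (hs i)]

lemma lintegral_W_omega {Ω : Type*} [MeasurableSpace Ω] (P : Measure Ω) {lam s : ℝ}
    (hlam : 0 < lam) (hs : 0 < s) (hs1 : s < 1)
    (E : ℕ → Ω → ℝ) (hEmeas : ∀ i, Measurable (E i))
    (hEindep : iIndepFun E P)
    (hEdist : ∀ i, P.map (E i) = expMeasure lam) (n : ℕ) :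
    ∫⁻ ω, ∏ i ∈ Finset.range n,
        ENNReal.ofReal (min (∑ k ∈ Finset.range (i+1), E k ω) 1 ^ (-s)) ∂P
      ≤ ENNReal.ofReal (psiA lam s 0) := by
  have hT : Measurable fun ω (i : Fin n) => E i ω := measurable_pi_iff.2 fun i => hEmeas i
  have hWm : Measurable fun y : Fin n → ℝ => W s n 0 y :=
    (W_meas s n).comp measurable_prodMk_left
  have hint : ∀ ω, (∏ i ∈ Finset.range n,
      ENNReal.ofReal (min (∑ k ∈ Finset.range (i+1), E k ω) 1 ^ (-s)))
      = W s n 0 (fun i : Fin n => E i ω) := by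
    intro ω
    rw [W_apply s n 0 (fun k => E k ω)]
    simp only [zero_add]
  calc ∫⁻ ω, ∏ i ∈ Finset.range n,
        ENNReal.ofReal (min (∑ k ∈ Finset.range (i+1), E k ω) 1 ^ (-s)) ∂P
      = ∫⁻ ω, W s n 0 (fun i : Fin n => E i ω) ∂P := lintegral_congr hint
    _ = ∫⁻ y, W s n 0 y ∂(P.map (fun ω (i : Fin n) => E i ω)) := (lintegral_map hWm hT).symm
    _ = ∫⁻ y, W s n 0 y ∂(Measure.pi fun _ : Fin n => expMeasure lam) := by
        rw [map_fin_eq_pi P hlam E hEmeas hEindep hEdist n]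
    _ ≤ ENNReal.ofReal (psiA lam s 0) := W_lintegral_le hlam hs hs1 n 0 le_rfl

lemma lintegral_expSum_omega {Ω : Type*} [MeasurableSpace Ω] (P : Measure Ω) {lam : ℝ}
    (hlam : 0 < lam)
    (E : ℕ → Ω → ℝ) (hEmeas : ∀ i, Measurable (E i))
    (hEindep : iIndepFun E P)
    (hEdist : ∀ i, P.map (E i) = expMeasure lam) (n : ℕ) :
    ∫⁻ ω, ENNReal.ofReal (Real.exp (-(∑ k ∈ Finset.range n, E k ω))) ∂P
      = ENNReal.ofReal (lam / (1 + lam)) ^ n := by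
  have hT : Measurable fun ω (i : Fin n) => E i ω := measurable_pi_iff.2 fun i => hEmeas i
  have hinner : Measurable fun z : Fin n → ℝ => ENNReal.ofReal (Real.exp (-(∑ i, z i))) :=
    Measurable.ennreal_ofReal (Real.continuous_exp.measurable.comp
      (Finset.measurable_sum _ (fun i _ => measurable_pi_apply i)).neg)
  calc ∫⁻ ω, ENNReal.ofReal (Real.exp (-(∑ k ∈ Finset.range n, E k ω))) ∂P
      = ∫⁻ ω, ENNReal.ofReal (Real.exp (-(∑ i : Fin n, E i ω))) ∂P := by
        apply lintegral_congr
        intro ω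
        rw [Finset.sum_range (fun k => E k ω)]
    _ = ∫⁻ y, ENNReal.ofReal (Real.exp (-(∑ i, y i)))
          ∂(P.map (fun ω (i : Fin n) => E i ω)) := (lintegral_map hinner hT).symm
    _ = ENNReal.ofReal (lam / (1 + lam)) ^ n := by
        rw [map_fin_eq_pi P hlam E hEmeas hEindep hEdist n]
        exact expSum_lintegral hlam n

lemma psiA_zero {lam s : ℝ} (hs : 0 < s) (hs1 : s < 1) :
    psiA lam s 0 = Real.exp (lam * (s / (1 - s))) := by
  rw [psiA, min_eq_left zero_le_one, phiA, Real.zero_rpow (by linarith : (1:ℝ) - s ≠ 0)]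
  congr 1
  have : (1:ℝ) - s ≠ 0 := by linarith
  field_simp
  ring

lemma expo_id {lam a : ℝ} (hlam : 0 < lam) (ha : 0 < a) :
    lam * ((1 - Real.sqrt lam / Real.sqrt a) / (1 - (1 - Real.sqrt lam / Real.sqrt a))) +
      (-a) * (1 - Real.sqrt lam / Real.sqrt a) = -(Real.sqrt a - Real.sqrt lam)^2 := by
  have hsa : 0 < Real.sqrt a := Real.sqrt_pos.2 ha
  have hsl : 0 < Real.sqrt lam := Real.sqrt_pos.2 hlam
  have ha2 : Real.sqrt a ^ 2 = a := Real.sq_sqrt ha.le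
  have hl2 : Real.sqrt lam ^ 2 = lam := Real.sq_sqrt hlam.le
  have h1 : 1 - (1 - Real.sqrt lam / Real.sqrt a) = Real.sqrt lam / Real.sqrt a := by ring
  set u := Real.sqrt a with hu
  set v := Real.sqrt lam with hv
  clear_value u v
  rw [h1, ← ha2, ← hl2]
  field_simp
  ring

lemma expMeasure_singleton_zero {lam : ℝ} : expMeasure lam {(0:ℝ)} = 0 := by
  rw [expMeasure_eq, withDensity_apply _ (measurableSet_singleton 0),
    setLIntegral_measure_zero _ _ Real.volume_singleton]

end Stmt4Aux

open Stmt4Aux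

/-- For `X = ∏_{i=1}^∞ min{∑_{k=1}^i E_k, 1}` with `E_i` i.i.d. `Exp(λ)`, for any
`t ∈ (0,1)`: `P(X ≤ t) ≤ exp(-((√(-log t) - √λ)₊)²)`. -/
theorem stmt_4
    {Ω : Type*} [MeasurableSpace Ω] (P : Measure Ω) [IsProbabilityMeasure P]
    (lam : ℝ) (hlam : 0 < lam)
    (E : ℕ → Ω → ℝ) (hEmeas : ∀ i, Measurable (E i))
    (hEindep : iIndepFun E P)
    (hEdist : ∀ i, P.map (E i) = expMeasure lam)
    (X : Ω → ℝ)
    (hX : ∀ ω, X ω = ∏' i : ℕ, min (∑ k ∈ Finset.range (i + 1), E k ω) 1)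
    (t : ℝ) (ht : t ∈ Set.Ioo (0 : ℝ) 1) :
    (P {ω | X ω ≤ t}).toReal ≤
      Real.exp (-(max (Real.sqrt (-Real.log t) - Real.sqrt lam) 0) ^ 2) := by
  obtain ⟨ht0, ht1⟩ := ht
  have hlog : Real.log t < 0 := Real.log_neg ht0 ht1
  set a : ℝ := -Real.log t with ha
  have ha0 : 0 < a := by rw [ha]; linarith
  rcases le_or_gt (Real.sqrt a) (Real.sqrt lam) with hcase | hcase
  · -- trivial case
    have hmax : max (Real.sqrt a - Real.sqrt lam) 0 = 0 := max_eq_right (by linarith)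
    rw [hmax]
    have h1 : P {ω | X ω ≤ t} ≤ 1 := by
      rw [← measure_univ (μ := P)]
      exact measure_mono (Set.subset_univ _)
    calc (P {ω | X ω ≤ t}).toReal ≤ (1 : ENNReal).toReal := ENNReal.toReal_mono ENNReal.one_ne_top h1
      _ = 1 := by simp
      _ ≤ Real.exp (-(0:ℝ)^2) := by norm_num
  · -- main case
    have hsa : 0 < Real.sqrt a := Real.sqrt_pos.2 ha0
    have hsl : 0 < Real.sqrt lam := Real.sqrt_pos.2 hlam
    set s : ℝ := 1 - Real.sqrt lam / Real.sqrt a with hsdef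
    have hs0 : 0 < s := by
      rw [hsdef]
      have : Real.sqrt lam / Real.sqrt a < 1 := (div_lt_one hsa).2 hcase
      linarith
    have hs1 : s < 1 := by
      rw [hsdef]
      have : 0 < Real.sqrt lam / Real.sqrt a := div_pos hsl hsa
      linarith
    set B : ℝ := Real.exp (-(Real.sqrt a - Real.sqrt lam)^2) with hBdef
    have hB0 : 0 < B := Real.exp_pos _
    have hmax : max (Real.sqrt a - Real.sqrt lam) 0 = Real.sqrt a - Real.sqrt lam :=
      max_eq_left (by linarith)
    rw [hmax]
    set q : ℝ := lam / (1 + lam) with hq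
    have hq0 : 0 ≤ q := by rw [hq]; positivity
    have hq1 : q < 1 := by
      rw [hq]
      rw [div_lt_one (by linarith)]
      linarith
    -- key identity: psiA0 * t^s = B
    have hpsiB : psiA lam s 0 * t ^ s = B := by
      rw [psiA_zero hs0 hs1, Real.rpow_def_of_pos ht0, ← Real.exp_add, hBdef]
      congr 1
      have hlogt : Real.log t = -a := by rw [ha]; ring
      rw [hlogt]
      have h2 := expo_id hlam ha0
      rw [hsdef]
      linarith [h2]
    -- per-n bound
    have keyn : ∀ n : ℕ, (P {ω | X ω ≤ t}).toReal ≤ B + Real.exp 1 * q ^ (n+1) := by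
      intro n
      have hGoodc : P {ω | (∀ k, 0 ≤ E k ω) ∧ 0 < E 0 ω}ᶜ = 0 := by
        apply measure_mono_null (t := (⋃ k, {ω | E k ω < 0}) ∪ {ω | E 0 ω = 0})
        · intro ω hω
          simp only [Set.mem_compl_iff, Set.mem_setOf_eq, not_and_or, not_forall, not_lt] at hω
          rcases hω with ⟨k, hk⟩ | h0
          · exact Or.inl (Set.mem_iUnion.2 ⟨k, not_le.1 hk⟩)
          · rcases lt_or_eq_of_le h0 with h | h
            · exact Or.inl (Set.mem_iUnion.2 ⟨0, h⟩)
            · exact Or.inr h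
        · apply measure_union_null
          · apply measure_iUnion_null
            intro k
            have : {ω | E k ω < 0} = E k ⁻¹' (Set.Iio 0) := rfl
            rw [this, ← Measure.map_apply (hEmeas k) measurableSet_Iio, hEdist k]
            exact expMeasure_Iio_zero
          · have : {ω | E 0 ω = 0} = E 0 ⁻¹' {0} := rfl
            rw [this, ← Measure.map_apply (hEmeas 0) (measurableSet_singleton 0), hEdist 0]
            exact expMeasure_singleton_zero
      have hrpow : Measurable fun x : ℝ => x ^ (-s) := by fun_prop
      have hSm : ∀ i : ℕ, Measurable fun ω => ∑ k ∈ Finset.range (i+1), E k ω := fun i =>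
        Finset.measurable_sum _ fun k _ => hEmeas k
      have hfnmeas : Measurable fun ω => ∏ i ∈ Finset.range (n+1),
          ENNReal.ofReal (min (∑ k ∈ Finset.range (i+1), E k ω) 1 ^ (-s)) :=
        Finset.measurable_prod _ fun i _ =>
          Measurable.ennreal_ofReal (hrpow.comp ((hSm i).min measurable_const))
      have hincl : {ω | X ω ≤ t} ∩ {ω | (∀ k, 0 ≤ E k ω) ∧ 0 < E 0 ω} ⊆
          {ω | ENNReal.ofReal (t ^ (-s)) ≤ ∏ i ∈ Finset.range (n+1),
            ENNReal.ofReal (min (∑ k ∈ Finset.range (i+1), E k ω) 1 ^ (-s))}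
          ∪ {ω | ∑ k ∈ Finset.range (n+1), E k ω < 1} := by
        rintro ω ⟨hXt, hnn, hpos⟩
        by_cases hSn : (∑ k ∈ Finset.range (n+1), E k ω) < 1
        · exact Or.inr hSn
        push_neg at hSn
        left
        have hmono : ∀ i j : ℕ, i ≤ j → (∑ k ∈ Finset.range (i+1), E k ω)
            ≤ ∑ k ∈ Finset.range (j+1), E k ω := fun i j hij =>
          Finset.sum_le_sum_of_subset_of_nonneg (Finset.range_subset_range.2 (by omega))
            (fun k _ _ => hnn k)
        have hposS : ∀ i : ℕ, 0 < ∑ k ∈ Finset.range (i+1), E k ω := fun i =>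
          lt_of_lt_of_le hpos (Finset.single_le_sum (f := fun k => E k ω)
            (fun k _ => hnn k) (Finset.mem_range.2 (Nat.succ_pos i)))
        have hXeq : X ω = ∏ i ∈ Finset.range (n+1),
            min (∑ k ∈ Finset.range (i+1), E k ω) 1 := by
          rw [hX ω]
          apply tprod_eq_prod
          intro i hi
          have hni : n ≤ i := by
            simp only [Finset.mem_range, not_lt] at hi
            omega
          exact min_eq_right (le_trans hSn (hmono n i hni))
        have hminpos : ∀ i ∈ Finset.range (n+1),
            0 < min (∑ k ∈ Finset.range (i+1), E k ω) 1 :=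
          fun i _ => lt_min (hposS i) one_pos
        have hprodpos : 0 < ∏ i ∈ Finset.range (n+1),
            min (∑ k ∈ Finset.range (i+1), E k ω) 1 := Finset.prod_pos hminpos
        have hprodle : (∏ i ∈ Finset.range (n+1),
            min (∑ k ∈ Finset.range (i+1), E k ω) 1) ≤ t := by
          rw [← hXeq]; exact hXt
        have heqfn : (∏ i ∈ Finset.range (n+1),
            ENNReal.ofReal (min (∑ k ∈ Finset.range (i+1), E k ω) 1 ^ (-s)))
            = ENNReal.ofReal ((∏ i ∈ Finset.range (n+1),
              min (∑ k ∈ Finset.range (i+1), E k ω) 1) ^ (-s)) := by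
          rw [← Real.finset_prod_rpow _ _ (fun i hi => (hminpos i hi).le) (-s),
            ENNReal.ofReal_prod_of_nonneg (fun i hi => Real.rpow_nonneg (hminpos i hi).le _)]
        show ENNReal.ofReal (t ^ (-s)) ≤ _
        rw [heqfn]
        exact ENNReal.ofReal_le_ofReal
          (Real.rpow_le_rpow_of_nonpos hprodpos hprodle (by linarith))
      have hM1 : P {ω | ENNReal.ofReal (t ^ (-s)) ≤ ∏ i ∈ Finset.range (n+1),
          ENNReal.ofReal (min (∑ k ∈ Finset.range (i+1), E k ω) 1 ^ (-s))}
          ≤ ENNReal.ofReal B := by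
        have hts : 0 < t ^ (-s) := Real.rpow_pos_of_pos ht0 _
        refine (meas_ge_le_lintegral_div hfnmeas.aemeasurable
          (ne_of_gt (ENNReal.ofReal_pos.2 hts)) ENNReal.ofReal_ne_top).trans ?_
        refine le_trans (ENNReal.div_le_div_right
          (lintegral_W_omega P hlam hs0 hs1 E hEmeas hEindep hEdist (n+1)) _) ?_
        rw [← ENNReal.ofReal_div_of_pos hts]
        apply ENNReal.ofReal_le_ofReal
        rw [Real.rpow_neg ht0.le, div_inv_eq_mul]
        exact hpsiB.le
      have hM2 : P {ω | ∑ k ∈ Finset.range (n+1), E k ω < 1}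
          ≤ ENNReal.ofReal (Real.exp 1 * q ^ (n+1)) := by
        have hfm : Measurable fun ω =>
            ENNReal.ofReal (Real.exp (-(∑ k ∈ Finset.range (n+1), E k ω))) :=
          Measurable.ennreal_ofReal (Real.continuous_exp.measurable.comp (hSm n).neg)
        have hsub : {ω | ∑ k ∈ Finset.range (n+1), E k ω < 1}
            ⊆ {ω | ENNReal.ofReal (Real.exp (-1)) ≤
              ENNReal.ofReal (Real.exp (-(∑ k ∈ Finset.range (n+1), E k ω)))} := by
          intro ω hω
          have hω' : (∑ k ∈ Finset.range (n+1), E k ω) < 1 := hω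
          exact ENNReal.ofReal_le_ofReal (Real.exp_le_exp.2 (by linarith))
        refine (measure_mono hsub).trans ?_
        refine (meas_ge_le_lintegral_div hfm.aemeasurable
          (ne_of_gt (ENNReal.ofReal_pos.2 (Real.exp_pos _))) ENNReal.ofReal_ne_top).trans ?_
        rw [lintegral_expSum_omega P hlam E hEmeas hEindep hEdist (n+1),
          ← ENNReal.ofReal_pow hq0, ← ENNReal.ofReal_div_of_pos (Real.exp_pos _)]
        apply ENNReal.ofReal_le_ofReal
        exact le_of_eq (by rw [Real.exp_neg, div_inv_eq_mul]; ring)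
      have hPA : P {ω | X ω ≤ t}
          ≤ ENNReal.ofReal B + ENNReal.ofReal (Real.exp 1 * q ^ (n+1)) := by
        calc P {ω | X ω ≤ t}
            ≤ P (({ω | X ω ≤ t} ∩ {ω | (∀ k, 0 ≤ E k ω) ∧ 0 < E 0 ω})
              ∪ {ω | (∀ k, 0 ≤ E k ω) ∧ 0 < E 0 ω}ᶜ) := by
              apply measure_mono
              intro ω h
              by_cases hg : ω ∈ {ω | (∀ k, 0 ≤ E k ω) ∧ 0 < E 0 ω}
              exacts [Or.inl ⟨h, hg⟩, Or.inr hg]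
          _ ≤ P ({ω | X ω ≤ t} ∩ {ω | (∀ k, 0 ≤ E k ω) ∧ 0 < E 0 ω})
              + P ({ω | (∀ k, 0 ≤ E k ω) ∧ 0 < E 0 ω}ᶜ) := measure_union_le _ _
          _ = P ({ω | X ω ≤ t} ∩ {ω | (∀ k, 0 ≤ E k ω) ∧ 0 < E 0 ω}) := by
              rw [hGoodc, add_zero]
          _ ≤ P ({ω | ENNReal.ofReal (t ^ (-s)) ≤ ∏ i ∈ Finset.range (n+1),
                ENNReal.ofReal (min (∑ k ∈ Finset.range (i+1), E k ω) 1 ^ (-s))}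
              ∪ {ω | ∑ k ∈ Finset.range (n+1), E k ω < 1}) := measure_mono hincl
          _ ≤ P {ω | ENNReal.ofReal (t ^ (-s)) ≤ ∏ i ∈ Finset.range (n+1),
                ENNReal.ofReal (min (∑ k ∈ Finset.range (i+1), E k ω) 1 ^ (-s))}
              + P {ω | ∑ k ∈ Finset.range (n+1), E k ω < 1} := measure_union_le _ _
          _ ≤ _ := add_le_add hM1 hM2
      have hfin := ENNReal.toReal_mono
        (ENNReal.add_ne_top.2 ⟨ENNReal.ofReal_ne_top, ENNReal.ofReal_ne_top⟩) hPA
      rw [ENNReal.toReal_add ENNReal.ofReal_ne_top ENNReal.ofReal_ne_top,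
        ENNReal.toReal_ofReal hB0.le, ENNReal.toReal_ofReal (by positivity)] at hfin
      exact hfin
    -- take the limit
    have htend : Filter.Tendsto (fun n : ℕ => B + Real.exp 1 * q ^ (n+1)) Filter.atTop
        (nhds B) := by
      have h1 : Filter.Tendsto (fun n : ℕ => q ^ (n+1)) Filter.atTop (nhds 0) :=
        (tendsto_pow_atTop_nhds_zero_of_lt_one hq0 hq1).comp (Filter.tendsto_add_atTop_nat 1)
      have := Filter.Tendsto.add (tendsto_const_nhds (x := B))
        (h1.const_mul (Real.exp 1))
      simpa using this
    exact ge_of_tendsto' htend keyn
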